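/- In the slow NIM game NIM(n,k) (n piles, each move reduces exactly k distinct nonempty piles by one stone each, normal play), every position in which all pile sizes are even is a P-position (previous-player win). -/
import Mathlib


/-- A move in NIM(n,k): choose k nonempty piles and remove one stone from each. -/
def NimMove (n k : ℕ) (x y : Fin n → ℕ) : Prop :=
  ∃ S : Finset (Fin n), S.card = k ∧ (∀ i ∈ S, 0 < x i) ∧
    ∀ i, y i = if i ∈ S then x i - 1 else x i

mutual
/-- P-position: every move leads to an N-position (player to move loses). -/
inductive PPos (n k : ℕ) : (Fin n → ℕ) → Prop
  | mk (x : Fin n → ℕ) : (∀ y, NimMove n k x y → NPos n k y) → PPos n k x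
/-- N-position: some move leads to a P-position (player to move wins). -/
inductive NPos (n k : ℕ) : (Fin n → ℕ) → Prop
  | mk (x y : Fin n → ℕ) : NimMove n k x y → PPos n k y → NPos n k x
end

theorem stmt0 (n k : ℕ) (hk : 0 < k) (hkn : k ≤ n) (x : Fin n → ℕ)
    (hx : ∀ i, Even (x i)) : PPos n k x := by
  generalize hN : (∑ i, x i) = N
  induction N using Nat.strong_induction_on generalizing x with
  | _ N ih =>
    constructor
    intro y hy
    obtain ⟨S, hS, hpos, hyeq⟩ := hy
    -- from a pile x i even and positive, x i ≥ 2
    have h2 : ∀ i ∈ S, 2 ≤ x i := by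
      intro i hi
      obtain ⟨m, hm⟩ := hx i
      have := hpos i hi
      omega
    set z : Fin n → ℕ := fun i => if i ∈ S then y i - 1 else y i with hz
    refine NPos.mk y z ⟨S, hS, ?_, fun i => rfl⟩ ?_
    · intro i hi
      have := h2 i hi
      rw [hyeq i, if_pos hi]
      omega
    · have hzx : ∀ i, z i = if i ∈ S then x i - 2 else x i := by
        intro i
        simp only [hz]
        rw [hyeq i]
        by_cases h : i ∈ S <;> simp [h] <;> omega
      refine ih (∑ i, z i) ?_ z ?_ rfl
      · rw [← hN]
        apply Finset.sum_lt_sum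
        · intro i _
          rw [hzx i]
          split <;> omega
        · have hSne : S.Nonempty := Finset.card_pos.mp (hS ▸ hk)
          obtain ⟨i, hi⟩ := hSne
          exact ⟨i, Finset.mem_univ i, by rw [hzx i, if_pos hi]; have := h2 i hi; omega⟩
      · intro i
        rw [hzx i]
        by_cases h : i ∈ S
        · simp only [if_pos h]
          obtain ⟨m, hm⟩ := hx i
          have := h2 i h
          exact ⟨m - 1, by omega⟩
        · simpa [h] using hx i
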